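/- Let g ≥ 10^6 be an integer and let (a,b,c) ∈ D_g. Then a ≤ (g^124 − 2)/2. -/

import Mathlib

set_option maxHeartbeats 1000000

/-- `N` is a repdigit in base `g` with at least two digits:
`N = d * (g^k - 1)/(g-1)` for some digit `1 ≤ d ≤ g-1` and some `k ≥ 2`. -/
def Repdigit (g N : ℕ) : Prop :=
  0 < N ∧ ∃ d k : ℕ, 1 ≤ d ∧ d ≤ g - 1 ∧ 2 ≤ k ∧ N * (g - 1) = d * (g ^ k - 1)

/-- The set of Diophantine triples with values in the repdigits in base `g`. -/
def DioTriples (g : ℕ) : Set (ℕ × ℕ × ℕ) :=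
  {p | 0 < p.2.2 ∧ p.2.2 < p.2.1 ∧ p.2.1 < p.1 ∧
    Repdigit g (p.1 * p.2.1 + 1) ∧ Repdigit g (p.1 * p.2.2 + 1) ∧
    Repdigit g (p.2.1 * p.2.2 + 1)}

lemma ordlem (g u v d d' : ℤ) (K L : ℕ) (hg : (1000000:ℤ) ≤ g)
    (hv : 1 ≤ v) (huv : v < u)
    (hd : 1 ≤ d) (hd' : d ≤ g - 1) (he : 1 ≤ d') (he' : d' ≤ g - 1)
    (hL : 2 ≤ L)
    (h1 : (g - 1) * u = d * g ^ K - (d + (g - 1)))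
    (h2 : (g - 1) * v = d' * g ^ L - (d' + (g - 1))) : L ≤ K := by
  by_contra hc
  push_neg at hc
  have hg1 : (1:ℤ) ≤ g := by linarith
  have hKL : K ≤ L - 1 := by omega
  have hp1 : (g:ℤ) ^ K ≤ g ^ (L-1) := pow_le_pow_right₀ hg1 hKL
  have hp2 : (g:ℤ) ^ L = g ^ (L-1) * g := by
    rw [← pow_succ]; congr 1; omega
  have hp3 : (g:ℤ) ≤ g ^ (L-1) := by
    calc (g:ℤ) = g ^ 1 := (pow_one g).symm
    _ ≤ g ^ (L-1) := pow_le_pow_right₀ hg1 (by omega)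
  have hu1 : (g-1) * u ≤ (g-1) * g^(L-1) - g := by
    have : d * g ^ K ≤ (g-1) * g^(L-1) := by
      have h0 : (0:ℤ) < g ^ K := pow_pos (by linarith) _
      nlinarith
    linarith
  have hv1 : g ^ L - (2*g - 2) ≤ (g-1) * v := by nlinarith [pow_pos (show (0:ℤ) < g by linarith) L]
  have huv1 : (g-1) * v + (g-1) ≤ (g-1) * u := by nlinarith
  nlinarith

/-- Squeeze lemma A: the master identity is impossible when both `M` and `s` are ≥ 6. -/
lemma squeezeA (g d1 d2 d3 e1 e2 e3 j : ℤ) (K L M s : ℕ) (hg : (1000000:ℤ) ≤ g)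
    (hd1 : 1 ≤ d1) (hd1' : d1 ≤ g - 1)
    (hd2 : 1 ≤ d2) (hd2' : d2 ≤ g - 1)
    (hd3 : 1 ≤ d3) (hd3' : d3 ≤ g - 1)
    (he1l : g ≤ e1) (he1u : e1 ≤ 2*g)
    (he2l : g ≤ e2) (he2u : e2 ≤ 2*g)
    (he3l : g ≤ e3) (he3u : e3 ≤ 2*g)
    (hj2 : j^2 ≤ 4*g^2)
    (hKb : 6 ≤ K) (hLb : 6 ≤ L) (hMb : 6 ≤ M) (hsb : 6 ≤ s)
    (hMaster : j^2 * (g-1) * (d1 * g ^ K - e1) * (d2 * g ^ L - e2)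
      = (d2 * e1 - d1 * e2 * g ^ s)^2 * (d3 * g ^ M - e3)) : False := by
  have hg1 : (1:ℤ) ≤ g := by linarith
  have hg0 : (0:ℤ) < g := by linarith
  obtain ⟨mK, hmK⟩ : ∃ t, K = 6 + t := ⟨K - 6, by omega⟩
  obtain ⟨mL, hmL⟩ : ∃ t, L = 6 + t := ⟨L - 6, by omega⟩
  obtain ⟨mM, hmM⟩ : ∃ t, M = 6 + t := ⟨M - 6, by omega⟩
  obtain ⟨mS, hmS⟩ : ∃ t, s = 6 + t := ⟨s - 6, by omega⟩
  rw [hmK, hmL, hmM, hmS] at hMaster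
  simp only [pow_add] at hMaster
  -- N_A = g^6 * T_A
  obtain ⟨TA, hTA⟩ : ∃ t : ℤ, g^6 * t = j^2*(g-1)*e1*e2 + (d2*e1)^2*e3 :=
    ⟨ -(j^2*(g-1)*d1*d2*(g^6*g^mK*g^mL))
        + j^2*(g-1)*(d1*e2*g^mK) + j^2*(g-1)*(d2*e1*g^mL)
        + (d2*e1 - d1*e2*(g^6*g^mS))^2*d3*g^mM
        + e3*d1*e2*g^mS*(2*d2*e1 - d1*e2*(g^6*g^mS)), by linear_combination -hMaster⟩
  -- positivity
  have p1 : 0 ≤ j^2*(g-1)*e1*e2 :=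
    mul_nonneg (mul_nonneg (mul_nonneg (sq_nonneg j) (by linarith)) (by linarith)) (by linarith)
  have p2 : (0:ℤ) < (d2*e1)^2*e3 :=
    mul_pos (pow_pos (mul_pos (by linarith) (by linarith)) 2) (by linarith)
  -- size: N_A < g^6
  have r1 : j^2*(g-1) ≤ 4*g^2*g :=
    mul_le_mul hj2 (by linarith) (by linarith) (by positivity)
  have r2 : e1*e2 ≤ (2*g)*(2*g) := mul_le_mul he1u he2u (by linarith) (by linarith)
  have r3' := mul_le_mul r1 r2 (mul_nonneg (by linarith) (by linarith))
    (by positivity : (0:ℤ) ≤ 4*g^2*g)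
  have r3 : j^2*(g-1)*e1*e2 ≤ 16*g^5 := by linarith only [r3']
  have r4 : (d2*e1)^2 ≤ (g*(2*g))^2 := by
    have h0 : d2*e1 ≤ g*(2*g) := mul_le_mul (by linarith) he1u (by linarith) (by linarith)
    have h1 : (0:ℤ) ≤ d2*e1 := mul_nonneg (by linarith) (by linarith)
    nlinarith [h0, h1]
  have r5' : (d2*e1)^2*e3 ≤ (g*(2*g))^2*(2*g) :=
    mul_le_mul r4 he3u (by linarith) (by positivity)
  have r5 : (d2*e1)^2*e3 ≤ 8*g^5 := by linarith only [r5']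
  have rg : 16*g^5 + 8*g^5 < g^6 := by
    have h0 : (0:ℤ) ≤ g^5 := by positivity
    have h1 : g^5 * 25 ≤ g^5 * g := mul_le_mul_of_nonneg_left (by linarith) h0
    have h2 : (g:ℤ)^6 = g^5 * g := by ring
    linarith
  have hNAsmall : j^2*(g-1)*e1*e2 + (d2*e1)^2*e3 < g^6 := by linarith only [r3, r5, rg]
  have hNApos : 0 < j^2*(g-1)*e1*e2 + (d2*e1)^2*e3 := by linarith only [p1, p2]
  have hp6 : (0:ℤ) < g^6 := by positivity
  rcases le_or_gt TA 0 with h | h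
  · have : g^6 * TA ≤ 0 := mul_nonpos_of_nonneg_of_nonpos (by positivity) h
    linarith
  · have h1 : (1:ℤ) ≤ TA := h
    have : g^6 * 1 ≤ g^6 * TA := mul_le_mul_of_nonneg_left h1 (by positivity)
    linarith

/-- Squeeze lemma B: the master identity is impossible when `s ≤ 5` but `M ≥ 16`. -/
lemma squeezeB (g d1 d2 d3 e1 e2 e3 j : ℤ) (K L M s : ℕ) (hg : (1000000:ℤ) ≤ g)
    (hd1 : 1 ≤ d1) (hd1' : d1 ≤ g - 1)
    (hd2 : 1 ≤ d2) (hd2' : d2 ≤ g - 1)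
    (hd3 : 1 ≤ d3) (hd3' : d3 ≤ g - 1)
    (he1l : g ≤ e1) (he1u : e1 ≤ 2*g)
    (he2l : g ≤ e2) (he2u : e2 ≤ 2*g)
    (he3l : g ≤ e3) (he3u : e3 ≤ 2*g)
    (hj2 : j^2 ≤ 4*g^2) (hj21 : 1 ≤ j^2)
    (hKb : 16 ≤ K) (hLb : 16 ≤ L) (hMb : 16 ≤ M) (hsb : s ≤ 5)
    (hMaster : j^2 * (g-1) * (d1 * g ^ K - e1) * (d2 * g ^ L - e2)
      = (d2 * e1 - d1 * e2 * g ^ s)^2 * (d3 * g ^ M - e3)) : False := by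
  have hg1 : (1:ℤ) ≤ g := by linarith
  have hg0 : (0:ℤ) < g := by linarith
  obtain ⟨mK, hmK⟩ : ∃ t, K = 16 + t := ⟨K - 16, by omega⟩
  obtain ⟨mL, hmL⟩ : ∃ t, L = 16 + t := ⟨L - 16, by omega⟩
  obtain ⟨mM, hmM⟩ : ∃ t, M = 16 + t := ⟨M - 16, by omega⟩
  rw [hmK, hmL, hmM] at hMaster
  simp only [pow_add] at hMaster
  obtain ⟨TB, hTB⟩ : ∃ t : ℤ, g^16 * t
      = j^2*(g-1)*e1*e2 + (d2*e1 - d1*e2*g^s)^2*e3 :=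
    ⟨ -(j^2*(g-1)*d1*d2*(g^16*g^mK*g^mL))
        + j^2*(g-1)*(d1*e2*g^mK) + j^2*(g-1)*(d2*e1*g^mL)
        + (d2*e1 - d1*e2*g^s)^2*d3*g^mM, by linear_combination -hMaster⟩
  -- bounds on g^s
  have hgs5 : (g:ℤ)^s ≤ g^5 := pow_le_pow_right₀ hg1 hsb
  have hgs0 : (0:ℤ) < g^s := pow_pos hg0 s
  -- positivity : N_B > 0
  have p1 : (g-1)*e1*e2 ≤ j^2*((g-1)*e1*e2) := by
    have h0 : (0:ℤ) ≤ (g-1)*e1*e2 :=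
      mul_nonneg (mul_nonneg (by linarith) (by linarith)) (by linarith)
    have h1 := mul_le_mul_of_nonneg_right hj21 h0
    linarith
  have p1' : (0:ℤ) < (g-1)*e1*e2 :=
    mul_pos (mul_pos (by linarith) (by linarith)) (by linarith)
  have p2 : 0 ≤ (d2*e1 - d1*e2*g^s)^2*e3 := mul_nonneg (sq_nonneg _) (by linarith)
  have hNBpos : 0 < j^2*(g-1)*e1*e2 + (d2*e1 - d1*e2*g^s)^2*e3 := by linarith only [p1, p1', p2]
  -- size : N_B < g^16
  have r1 : j^2*(g-1) ≤ 4*g^2*g :=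
    mul_le_mul hj2 (by linarith) (by linarith) (by positivity)
  have r2 : e1*e2 ≤ (2*g)*(2*g) := mul_le_mul he1u he2u (by linarith) (by linarith)
  have r3' := mul_le_mul r1 r2 (mul_nonneg (by linarith) (by linarith))
    (by positivity : (0:ℤ) ≤ 4*g^2*g)
  have r3 : j^2*(g-1)*e1*e2 ≤ 16*g^5 := by linarith only [r3']
  -- |X| ≤ 3*g^7
  have hg27 : (g:ℤ)^2 ≤ g^7 := pow_le_pow_right₀ hg1 (by norm_num)
  have x1 : d2*e1 ≤ 2*g^2 := by
    have h9 := mul_le_mul hd2' he1u (by linarith : (0:ℤ) ≤ e1) (by linarith : (0:ℤ) ≤ g - 1)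
    linarith only [h9, hg0]
  have x2 : d1*e2*g^s ≤ 2*g^7 := by
    have h0 : d1*e2 ≤ 2*g^2 := by
      have h9 := mul_le_mul hd1' he2u (by linarith : (0:ℤ) ≤ e2) (by linarith : (0:ℤ) ≤ g - 1)
      linarith only [h9, hg0]
    have h1 : d1*e2*g^s ≤ 2*g^2*g^5 := by
      have := mul_le_mul h0 hgs5 (by positivity) (by positivity)
      linarith
    have h2 : (2:ℤ)*g^2*g^5 = 2*g^7 := by ring
    linarith
  have x3 : (0:ℤ) ≤ d2*e1 := mul_nonneg (by linarith) (by linarith)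
  have x4 : (0:ℤ) ≤ d1*e2*g^s := mul_nonneg (mul_nonneg (by linarith) (by linarith)) hgs0.le
  have xsq : (d2*e1 - d1*e2*g^s)^2 ≤ 9*g^14 := by
    have h0 : 0 ≤ (3*g^7 - (d2*e1 - d1*e2*g^s))*(3*g^7 + (d2*e1 - d1*e2*g^s)) := by
      apply mul_nonneg <;> linarith
    linarith only [h0]
  have r5 : (d2*e1 - d1*e2*g^s)^2*e3 ≤ 18*g^15 := by
    have h0 := mul_le_mul xsq he3u (by linarith) (by positivity : (0:ℤ) ≤ 9*g^14)
    linarith only [h0]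
  have rg : 16*g^5 + 18*g^15 < g^16 := by
    have h0 : (0:ℤ) ≤ g^15 := by positivity
    have h00 : (g:ℤ)^5 ≤ g^15 := pow_le_pow_right₀ hg1 (by norm_num)
    have h1 : g^15 * 35 ≤ g^15 * g := mul_le_mul_of_nonneg_left (by linarith) h0
    have h2 : (g:ℤ)^16 = g^15 * g := by ring
    linarith
  have hNBsmall : j^2*(g-1)*e1*e2 + (d2*e1 - d1*e2*g^s)^2*e3 < g^16 := by linarith
  rcases le_or_gt TB 0 with h | h
  · have : g^16 * TB ≤ 0 := mul_nonpos_of_nonneg_of_nonpos (by positivity) h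
    linarith
  · have h1 : (1:ℤ) ≤ TB := h
    have : g^16 * 1 ≤ g^16 * TB := mul_le_mul_of_nonneg_left h1 (by positivity)
    linarith

lemma keylem (g d1 d2 d3 a b c : ℤ) (K L M : ℕ) (hg : (1000000:ℤ) ≤ g)
    (hc : 1 ≤ c) (hcb : c < b) (hba : b < a)
    (hd1 : 1 ≤ d1) (hd1' : d1 ≤ g - 1)
    (hd2 : 1 ≤ d2) (hd2' : d2 ≤ g - 1)
    (hd3 : 1 ≤ d3) (hd3' : d3 ≤ g - 1)
    (hK : 2 ≤ K) (hL : 2 ≤ L) (hM : 2 ≤ M)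
    (h1 : (g - 1) * (a * b) = d1 * g ^ K - (d1 + (g - 1)))
    (h2 : (g - 1) * (a * c) = d2 * g ^ L - (d2 + (g - 1)))
    (h3 : (g - 1) * (b * c) = d3 * g ^ M - (d3 + (g - 1))) :
    2 * a + 2 ≤ g ^ 124 := by
  have hg1 : (1:ℤ) ≤ g := by linarith
  have hg0 : (0:ℤ) < g := by linarith
  have hb : 2 ≤ b := by omega
  have ha : 3 ≤ a := by omega
  have hP : (0:ℤ) < g - 1 := by linarith
  -- ordering of the exponents
  have hac1 : (1:ℤ) ≤ a * c := by
    have := mul_le_mul (show (1:ℤ) ≤ a by linarith) (show (1:ℤ) ≤ c by linarith)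
      (by linarith) (by linarith)
    linarith only [this]
  have hbc1 : (1:ℤ) ≤ b * c := by
    have := mul_le_mul (show (1:ℤ) ≤ b by linarith) (show (1:ℤ) ≤ c by linarith)
      (by linarith) (by linarith)
    linarith only [this]
  have hacab : a * c < a * b := by
    have := (mul_lt_mul_iff_right₀ (show (0:ℤ) < a by linarith)).mpr hcb
    linarith
  have hbcac : b * c < a * c := by
    have := (mul_lt_mul_iff_left₀ (show (0:ℤ) < c by linarith)).mpr hba
    linarith
  have hLK : L ≤ K := ordlem g (a*b) (a*c) d1 d2 K L hg hac1 hacab hd1 hd1' hd2 hd2' hL h1 h2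
  have hML : M ≤ L := ordlem g (a*c) (b*c) d2 d3 L M hg hbc1 hbcac hd2 hd2' hd3 hd3' hM h2 h3
  -- abbreviations e1 e2 e3
  obtain ⟨e1, he1⟩ : ∃ e1, e1 = d1 + (g - 1) := ⟨_, rfl⟩
  obtain ⟨e2, he2⟩ : ∃ e2, e2 = d2 + (g - 1) := ⟨_, rfl⟩
  obtain ⟨e3, he3⟩ : ∃ e3, e3 = d3 + (g - 1) := ⟨_, rfl⟩
  rw [← he1] at h1
  rw [← he2] at h2
  rw [← he3] at h3
  have he1l : g ≤ e1 := by omega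
  have he1u : e1 ≤ 2*g := by omega
  have he2l : g ≤ e2 := by omega
  have he2u : e2 ≤ 2*g := by omega
  have he3l : g ≤ e3 := by omega
  have he3u : e3 ≤ 2*g := by omega
  have hpM : (0:ℤ) < g ^ M := pow_pos hg0 _
  have hpL : (0:ℤ) < g ^ L := pow_pos hg0 _
  have hpK : (0:ℤ) < g ^ K := pow_pos hg0 _
  -- b, c < g^M
  have hbcM : b * c < g ^ M := by
    have h4 : d3 * g ^ M ≤ (g-1) * g ^ M := mul_le_mul_of_nonneg_right hd3' hpM.le
    have h5 : (g-1) * (b*c) < (g-1) * g ^ M := by linarith only [h3, h4, he3l, hg0]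
    exact lt_of_mul_lt_mul_left h5 (by linarith)
  have hbM : b < g ^ M := by
    have := le_mul_of_one_le_right (show (0:ℤ) ≤ b by linarith) hc
    linarith only [this, hbcM]
  have hcM : c < g ^ M := by linarith only [hcb, hbM]
  -- relation (E)
  have hE : c * (d1 * g ^ K) - b * (d2 * g ^ L) = c * e1 - b * e2 := by
    linear_combination b * h2 - c * h1
  obtain ⟨s, hKs⟩ : ∃ s, K = L + s := ⟨K - L, by omega⟩
  obtain ⟨j, hjdef⟩ : ∃ j, j = c * d1 * g ^ s - b * d2 := ⟨_, rfl⟩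
  have hgKLs : (g:ℤ) ^ K = g ^ L * g ^ s := by rw [hKs, pow_add]
  have hps : (0:ℤ) < g ^ s := pow_pos hg0 _
  have hj : j * g ^ L = c * e1 - b * e2 := by
    rw [hjdef]
    linear_combination hE - c * d1 * hgKLs
  -- key identity:  d2*e1 - d1*e2*g^s = j*((g-1)*a)
  have hja : d2 * e1 - d1 * e2 * g ^ s = j * ((g - 1) * a) := by
    have hcc : c * (d2 * e1 - d1 * e2 * g ^ s) = c * (j * ((g - 1) * a)) := by
      linear_combination (-d2) * hj + e2 * hjdef + (-j) * h2
    exact mul_left_cancel₀ (show (c:ℤ) ≠ 0 by intro h; omega) hcc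
  -- j ≠ 0
  have hjne : j ≠ 0 := by
    intro hj0
    rw [hj0] at hja hj
    have hja' : d2 * e1 = d1 * e2 * g ^ s := by linarith
    have hj' : c * e1 = b * e2 := by linarith
    have q1 : d2 * e1 ≤ (g-1) * (2*g-2) := by
      have := mul_le_mul hd2' (show e1 ≤ 2*g-2 by omega) (by omega) (by omega)
      linarith
    rcases Nat.eq_zero_or_pos s with hs0 | hs1
    · rw [hs0] at hja'
      simp at hja'
      have hde : d2 = d1 := by
        have hz : (g - 1) * (d2 - d1) = 0 := by linear_combination hja' - d2 * he1 + d1 * he2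
        rcases mul_eq_zero.mp hz with h | h
        · omega
        · omega
      have he12 : e1 = e2 := by omega
      rw [he12] at hj'
      have : c = b := mul_right_cancel₀ (show (e2:ℤ) ≠ 0 by intro h; omega) hj'
      omega
    · rcases Nat.lt_or_ge s 2 with hs2 | hs2
      · -- s = 1
        have hseq : s = 1 := by omega
        rw [hseq, pow_one] at hja'
        have hb1 : d1 * e2 < 2 * g := by
          have h0 : d1 * e2 * g < (2*g) * g := by linarith only [q1, hja', hg0]
          exact lt_of_mul_lt_mul_right h0 (by linarith)
        have hd1e : d1 = 1 := by
          have h0 : d1 * g ≤ d1 * e2 := mul_le_mul_of_nonneg_left he2l (by linarith)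
          have h1' : d1 * g < 2 * g := by linarith
          have : d1 < 2 := lt_of_mul_lt_mul_right h1' (by linarith)
          omega
        have he1g : e1 = g := by omega
        rw [hd1e, he1g] at hja'
        have hz : (e2 - d2) * g = 0 := by linear_combination - hja'
        rcases mul_eq_zero.mp hz with h | h
        · omega
        · omega
      · -- s ≥ 2
        have hgs : (g:ℤ)^2 ≤ g ^ s := pow_le_pow_right₀ hg1 hs2
        have q2 : g * g^2 ≤ d1 * e2 * g ^ s := by
          have w0 : g ≤ d1 * e2 := by
            have := mul_le_mul_of_nonneg_right hd1 (show (0:ℤ) ≤ e2 by linarith)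
            linarith only [this, he2l]
          have h9 := mul_le_mul w0 hgs (by positivity)
            (show (0:ℤ) ≤ d1 * e2 by linarith only [w0, hg0])
          linarith only [h9]
        have q1' : d2 * e1 ≤ 2 * g^2 := by linarith only [q1, hg0]
        have q3 : 1000000 * g^2 ≤ g * g^2 := mul_le_mul_of_nonneg_right hg (sq_nonneg g)
        have q4 : (0:ℤ) < g^2 := by positivity
        linarith only [q1', q2, q3, q4, hja']
  -- |j| < 2g
  have hML' : (g:ℤ) ^ M ≤ g ^ L := pow_le_pow_right₀ hg1 hML
  have hce1 : c * e1 < 2 * g * g ^ M := by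
    have t1 : c * e1 ≤ c * (2*g) := mul_le_mul_of_nonneg_left he1u (by linarith)
    have t2 : c * (2*g) < g ^ M * (2*g) := by
      have := mul_lt_mul_of_pos_right hcM (show (0:ℤ) < 2*g by linarith)
      linarith only [this]
    linarith only [t1, t2]
  have hbe2 : b * e2 < 2 * g * g ^ M := by
    have t1 : b * e2 ≤ b * (2*g) := mul_le_mul_of_nonneg_left he2u (by linarith)
    have t2 : b * (2*g) < g ^ M * (2*g) := by
      have := mul_lt_mul_of_pos_right hbM (show (0:ℤ) < 2*g by linarith)
      linarith only [this]
    linarith only [t1, t2]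
  have hce1p : 0 < c * e1 := mul_pos (by linarith) (by linarith)
  have hbe2p : 0 < b * e2 := mul_pos (by linarith) (by linarith)
  have h2gML : 2 * g * g ^ M ≤ 2 * g * g ^ L := by
    have := mul_le_mul_of_nonneg_left hML' (show (0:ℤ) ≤ 2*g by linarith)
    linarith only [this]
  have hjub : j < 2 * g := by
    by_contra hcon; push_neg at hcon
    have t3 : 2 * g * g ^ L ≤ j * g ^ L := mul_le_mul_of_nonneg_right hcon hpL.le
    linarith only [t3, hj, hce1, hbe2p, h2gML]
  have hjlb : -(2*g) < j := by
    by_contra hcon; push_neg at hcon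
    have t3 : j * g ^ L ≤ -(2*g) * g ^ L := mul_le_mul_of_nonneg_right hcon hpL.le
    linarith only [t3, hce1p, hbe2, h2gML, hj]
  have hj2 : j ^ 2 ≤ 4 * g ^ 2 := by
    have := mul_pos (show (0:ℤ) < 2*g - j by linarith) (show (0:ℤ) < 2*g + j by linarith)
    linarith only [this]
  have hj21 : 1 ≤ j ^ 2 := by
    rcases lt_or_gt_of_ne hjne with h | h
    · have h' : j ≤ -1 := by omega
      linarith only [sq_nonneg (j+1), h']
    · have h' : 1 ≤ j := by omega
      linarith only [sq_nonneg (j-1), h']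
  -- L ≤ M+1
  have hLM1 : L ≤ M + 1 := by
    by_contra hcon; push_neg at hcon
    have h6 : M + 2 ≤ L := by omega
    have h7 : (g:ℤ)^(M+2) ≤ g ^ L := pow_le_pow_right₀ hg1 h6
    have h8 : (g:ℤ)^(M+2) = g^M * g^2 := by rw [pow_add]
    have h9 : 2 * g * g ^ M < g ^ M * g ^ 2 := by
      have w1 : (0:ℤ) < g^2 - 2*g := by
        have := mul_pos (show (0:ℤ) < g - 2 by linarith) hg0
        linarith only [this]
      have := mul_pos hpM w1
      linarith only [this]
    rcases lt_or_gt_of_ne hjne with h | h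
    · have h' : j ≤ -1 := by omega
      have t3 : j * g ^ L ≤ (-1) * g ^ L := mul_le_mul_of_nonneg_right h' hpL.le
      linarith only [t3, hj, hce1p, hbe2, h9, h8, h7]
    · have h' : 1 ≤ j := by omega
      have t3 : 1 * g ^ L ≤ j * g ^ L := mul_le_mul_of_nonneg_right h' hpL.le
      linarith only [t3, hj, hce1, hbe2p, h9, h8, h7]
  -- K ≤ L + M + 1
  have hKLM : K ≤ L + M + 1 := by
    by_contra hcon; push_neg at hcon
    have h6 : L + M + 2 ≤ K := by omega
    have h7 : (g:ℤ)^(L+M+2) ≤ g ^ K := pow_le_pow_right₀ hg1 h6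
    have h8 : (g:ℤ)^(L+M+2) = g^L * g^M * g^2 := by rw [pow_add, pow_add]
    have h9 : g^L * g^M * g^2 ≤ c * (d1 * g ^ K) := by
      have w1 : (1:ℤ) ≤ c * d1 := by
        have := mul_le_mul hc (show (1:ℤ) ≤ d1 by linarith) (by linarith) (by linarith)
        linarith only [this]
      have w2 : 1 * g ^ K ≤ (c * d1) * g ^ K := mul_le_mul_of_nonneg_right w1 hpK.le
      linarith only [w2, h7, h8]
    have t5 : b * d2 ≤ g^M * g := by
      have := mul_le_mul hbM.le hd2' (by linarith) hpM.le
      linarith only [this, hpM]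
    have t6 : b * (d2 * g^L) ≤ (g^M * g) * g^L := by
      have := mul_le_mul_of_nonneg_right t5 hpL.le
      linarith only [this]
    have t7 : c * (d1 * g ^ K) < (g^M * g) * g^L + 2 * g * g^M := by
      linarith only [hE, t6, hce1, hbe2p]
    have w3 : 2 * g * g^M ≤ g * g^M * g^L := by
      have u1 : (2:ℤ) ≤ g^L := by
        have u0 : (g:ℤ) ≤ g^L := by
          calc (g:ℤ) = g^1 := (pow_one g).symm
          _ ≤ g^L := pow_le_pow_right₀ hg1 (by omega)
        linarith only [u0, hg]
      have u2 : 2 * (g * g^M) ≤ g^L * (g * g^M) := by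
        have := mul_le_mul_of_nonneg_right u1
          (show (0:ℤ) ≤ g * g^M by positivity)
        linarith only [this]
      linarith only [u2]
    have w4 : (0:ℤ) < g^M * g^L := mul_pos hpM hpL
    have w5 : g^M * g^L * (g^2 - 2*g) > 0 := by
      have w6 : (0:ℤ) < g^2 - 2*g := by
        have := mul_pos (show (0:ℤ) < g - 2 by linarith) hg0
        linarith only [this]
      exact mul_pos w4 w6
    linarith only [h9, t7, w3, w5]
  -- master identity
  have hMaster : j^2 * (g-1) * (d1 * g ^ K - e1) * (d2 * g ^ L - e2)
      = (d2 * e1 - d1 * e2 * g ^ s)^2 * (d3 * g ^ M - e3) := by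
    rw [hja, ← h1, ← h2, ← h3]; ring
  -- M ≤ 15
  have hM15 : M ≤ 15 := by
    by_contra hcon; push_neg at hcon
    have hM16 : 16 ≤ M := by omega
    rcases Nat.lt_or_ge s 6 with hs5 | hs6
    · exact squeezeB g d1 d2 d3 e1 e2 e3 j K L M s hg hd1 hd1' hd2 hd2' hd3 hd3'
        he1l he1u he2l he2u he3l he3u hj2 hj21 (by omega) (by omega) hM16 (by omega) hMaster
    · exact squeezeA g d1 d2 d3 e1 e2 e3 j K L M s hg hd1 hd1' hd2 hd2' hd3 hd3'
        he1l he1u he2l he2u he3l he3u hj2 (by omega) (by omega) (by omega) hs6 hMaster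
  -- conclusion
  have hK33 : K ≤ 33 := by omega
  have hab : a * b < g ^ K := by
    have h6 : d1 * g ^ K ≤ (g-1) * g ^ K := mul_le_mul_of_nonneg_right hd1' hpK.le
    have h7 : (g-1) * (a*b) < (g-1) * g ^ K := by linarith only [h1, h6, he1l, hg0]
    exact lt_of_mul_lt_mul_left h7 (by linarith)
  have h33 : (g:ℤ) ^ K ≤ g ^ 33 := pow_le_pow_right₀ hg1 hK33
  have f1 : a * 2 ≤ a * b := mul_le_mul_of_nonneg_left hb (by linarith)
  have f4 : (g:ℤ) ≤ g ^ 33 := by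
    calc (g:ℤ) = g^1 := (pow_one g).symm
    _ ≤ g^33 := pow_le_pow_right₀ hg1 (by norm_num)
  have f5 : g^33 * 2 ≤ g^33 * g := mul_le_mul_of_nonneg_left (by linarith) (by positivity)
  have f6 : (g:ℤ)^33 * g = g^34 := by ring
  have f7 : (g:ℤ)^34 ≤ g^124 := pow_le_pow_right₀ hg1 (by norm_num)
  linarith only [f1, hab, h33, f4, f5, f6, f7, hg]

theorem stmt_1 (g : ℕ) (hg : 10 ^ 6 ≤ g) (a b c : ℕ)
    (h : (a, b, c) ∈ DioTriples g) :
    a ≤ (g ^ 124 - 2) / 2 := by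
  obtain ⟨hc, hcb, hba, r1, r2, r3⟩ := h
  obtain ⟨-, d1, K, hd1, hd1', hK, hr1⟩ := r1
  obtain ⟨-, d2, L, hd2, hd2', hL, hr2⟩ := r2
  obtain ⟨-, d3, M, hd3, hd3', hM, hr3⟩ := r3
  have hgN : 1000000 ≤ g := by norm_num at hg; exact hg
  have hg1 : 1 ≤ g := by omega
  have hgZ : (1000000:ℤ) ≤ (g:ℤ) := by exact_mod_cast hgN
  -- cast the three equations to ℤ
  have hz1 : ((a:ℤ) * b + 1) * ((g:ℤ) - 1) = (d1:ℤ) * ((g:ℤ)^K - 1) := by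
    have := congrArg (fun n : ℕ => (n:ℤ)) hr1
    push_cast [Nat.cast_sub hg1, Nat.cast_sub (Nat.one_le_pow K g (by omega))] at this
    convert this using 2 <;> push_cast <;> ring
  have hz2 : ((a:ℤ) * c + 1) * ((g:ℤ) - 1) = (d2:ℤ) * ((g:ℤ)^L - 1) := by
    have := congrArg (fun n : ℕ => (n:ℤ)) hr2
    push_cast [Nat.cast_sub hg1, Nat.cast_sub (Nat.one_le_pow L g (by omega))] at this
    convert this using 2 <;> push_cast <;> ring
  have hz3 : ((b:ℤ) * c + 1) * ((g:ℤ) - 1) = (d3:ℤ) * ((g:ℤ)^M - 1) := by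
    have := congrArg (fun n : ℕ => (n:ℤ)) hr3
    push_cast [Nat.cast_sub hg1, Nat.cast_sub (Nat.one_le_pow M g (by omega))] at this
    convert this using 2 <;> push_cast <;> ring
  have key := keylem (g:ℤ) (d1:ℤ) (d2:ℤ) (d3:ℤ) (a:ℤ) (b:ℤ) (c:ℤ) K L M hgZ
    (by exact_mod_cast hc) (by exact_mod_cast hcb) (by exact_mod_cast hba)
    (by exact_mod_cast hd1) (by
      have : d1 + 1 ≤ g := by omega
      have := (Nat.cast_le (α := ℤ)).mpr this
      push_cast at this; linarith)
    (by exact_mod_cast hd2) (by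
      have : d2 + 1 ≤ g := by omega
      have := (Nat.cast_le (α := ℤ)).mpr this
      push_cast at this; linarith)
    (by exact_mod_cast hd3) (by
      have : d3 + 1 ≤ g := by omega
      have := (Nat.cast_le (α := ℤ)).mpr this
      push_cast at this; linarith)
    hK hL hM
    (by linear_combination hz1) (by linear_combination hz2) (by linear_combination hz3)
  have hfin : 2 * a + 2 ≤ g ^ 124 := by exact_mod_cast key
  obtain ⟨X, hX⟩ : ∃ X, X = g ^ 124 := ⟨_, rfl⟩
  rw [← hX] at hfin ⊢
  omega
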